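/- If a join-semilattice S with least element 0 admits a basis, then the basis is unique and equals the set of nonzero coprime elements of S; consequently if S is finite with r nonzero coprime elements, S has exactly 2^r elements. -/
import Mathlib


def IsSemilatticeBasis {S : Type*} [SemilatticeSup S] [OrderBot S] (B : Set S) : Prop :=
  ∀ x : S, ∃! F : Finset S, ↑F ⊆ B ∧ x = F.sup id

/-- Nonzero coprime elements of a join-semilattice with bottom. -/
def NonzeroCoprimes (S : Type*) [SemilatticeSup S] [OrderBot S] : Set S :=
  {p | p ≠ ⊥ ∧ ∀ (F : Finset S) (hF : F.Nonempty), p ≤ F.sup' hF id → ∃ f ∈ F, p ≤ f}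

/-- A basis of a join-semilattice with bottom is unique and equals the set of nonzero
coprime elements; if moreover `S` is finite with `r` nonzero coprimes, then `S` has
exactly `2 ^ r` elements. -/
theorem basis_eq_coprimes_and_card {S : Type*} [SemilatticeSup S] [OrderBot S]
    (B : Set S) (hB : IsSemilatticeBasis B) :
    B = NonzeroCoprimes S ∧
      (Finite S → Nat.card S = 2 ^ Nat.card (NonzeroCoprimes S)) := by
  classical
  -- uniqueness of representation
  have uniq : ∀ F G : Finset S, ↑F ⊆ B → ↑G ⊆ B → F.sup id = G.sup id → F = G := by
    intro F G hF hG h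
    obtain ⟨H, -, hun⟩ := hB (F.sup id)
    have h1 := hun F ⟨hF, rfl⟩
    have h2 := hun G ⟨hG, h⟩
    rw [h1, h2]
  have hBC : B = NonzeroCoprimes S := by
    apply Set.eq_of_subset_of_subset
    · intro b hb
      constructor
      · intro hbot
        have : ({b} : Finset S) = (∅ : Finset S) := by
          apply uniq
          · simpa using hb
          · simp
          · simp [hbot]
        simp at this
      · intro F hF hle
        -- replace each f ∈ F by its representation
        set G : S → Finset S := fun f => (hB f).choose with hG
        have hGsub : ∀ f, ↑(G f) ⊆ B := fun f => (hB f).choose_spec.1.1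
        have hGsup : ∀ f, (G f).sup id = f := fun f => ((hB f).choose_spec.1.2).symm
        set H : Finset S := F.biUnion G with hH
        have hHsub : ↑H ⊆ B := by
          intro x hx
          simp only [hH, Finset.coe_biUnion, Set.mem_iUnion] at hx
          obtain ⟨f, -, hx⟩ := hx
          exact hGsub f hx
        have hHsup : H.sup id = F.sup id := by
          rw [hH, Finset.sup_biUnion]
          exact Finset.sup_congr rfl (fun f _ => hGsup f)
        have hble : b ≤ H.sup id := by
          rw [hHsup, ← Finset.sup'_eq_sup hF]
          exact hle
        have hins : insert b H = H := by
          apply uniq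
          · intro x hx
            rcases Finset.mem_coe.mp hx |> Finset.mem_insert.mp with h | h
            · exact h ▸ hb
            · exact hHsub h
          · exact hHsub
          · rw [Finset.sup_insert]
            exact sup_eq_right.mpr hble
        have hbH : b ∈ H := by rw [← hins]; exact Finset.mem_insert_self b H
        simp only [hH, Finset.mem_biUnion] at hbH
        obtain ⟨f, hf, hbf⟩ := hbH
        refine ⟨f, hf, ?_⟩
        calc b = id b := rfl
        _ ≤ (G f).sup id := Finset.le_sup hbf
        _ = f := hGsup f
    · rintro p ⟨hp0, hp⟩
      obtain ⟨F, ⟨hFB, hFsup⟩, -⟩ := hB p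
      have hFne : F.Nonempty := by
        rcases F.eq_empty_or_nonempty with h | h
        · exfalso; apply hp0; rw [hFsup, h]; simp
        · exact h
      have hple : p ≤ F.sup' hFne id := by
        rw [Finset.sup'_eq_sup hFne id]; exact le_of_eq hFsup
      obtain ⟨f, hf, hpf⟩ := hp F hFne hple
      have hfp : f ≤ p := by
        rw [hFsup]
        exact Finset.le_sup (f := id) hf
      have : p = f := le_antisymm hpf hfp
      exact this ▸ hFB hf
  refine ⟨hBC, ?_⟩
  intro hfin
  have : Finite ↥B := Subtype.finite
  have : Fintype ↥B := Fintype.ofFinite _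
  have : Fintype S := Fintype.ofFinite _
  -- bijection between Finset ↥B and S
  let e : Function.Embedding ↥B S := ⟨Subtype.val, Subtype.val_injective⟩
  have hbij : Function.Bijective (fun F : Finset ↥B => (F.map e).sup id) := by
    constructor
    · intro F G h
      have hF : ↑(F.map e) ⊆ B := by
        intro x hx; simp only [Finset.coe_map, Set.mem_image] at hx
        obtain ⟨y, -, rfl⟩ := hx; exact y.2
      have hG : ↑(G.map e) ⊆ B := by
        intro x hx; simp only [Finset.coe_map, Set.mem_image] at hx
        obtain ⟨y, -, rfl⟩ := hx; exact y.2
      have := uniq _ _ hF hG h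
      exact Finset.map_injective e this
    · intro x
      obtain ⟨F, ⟨hFB, hFsup⟩, -⟩ := hB x
      refine ⟨F.subtype (· ∈ B), ?_⟩
      have : (F.subtype (· ∈ B)).map (Function.Embedding.subtype _) = F := by
        rw [Finset.subtype_map]
        exact Finset.filter_true_of_mem (fun x hx => hFB hx)
      simp only [e]
      have he : (⟨Subtype.val, Subtype.val_injective⟩ : Function.Embedding ↥B S)
          = Function.Embedding.subtype _ := rfl
      rw [he, this, hFsup]
  have hcard : Nat.card S = Nat.card (Finset ↥B) := (Nat.card_eq_of_bijective _ hbij).symm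
  rw [hcard, ← hBC]
  rw [Nat.card_eq_fintype_card, Nat.card_eq_fintype_card, Fintype.card_finset]
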